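/- For the sequence ℓ_s = ℓ_1^{α^{s-1}} with α ≥ 2 and 0 < ℓ_1 ≤ 1/3, and h_s = ℓ_s - 2ℓ_{s+1}, the inequality ∑_{k=0}^{n} 1/(2^k h_k) ≤ 2/(2^n h_n) holds for all n ≥ 4. -/

import Mathlib

set_option maxHeartbeats 1000000 in

theorem stmt_3 (α l1 : ℝ) (hα : 2 ≤ α) (hl1 : 0 < l1) (hl1' : l1 ≤ 1/3)
    (ℓ h : ℕ → ℝ) (hℓ0 : ℓ 0 = 1)
    (hℓ : ∀ s : ℕ, 1 ≤ s → ℓ s = l1 ^ (α ^ (s - 1)))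
    (hh : ∀ s : ℕ, h s = ℓ s - 2 * ℓ (s + 1)) (n : ℕ) (hn : 4 ≤ n) :
    ∑ k ∈ Finset.range (n + 1), 1 / (2 ^ k * h k) ≤ 2 / (2 ^ n * h n) := by
  have hl1one : l1 ≤ 1 := by linarith
  -- positivity of ℓ
  have hℓpos : ∀ s, 1 ≤ s → 0 < ℓ s := by
    intro s hs; rw [hℓ s hs]; exact Real.rpow_pos_of_pos hl1 _
  -- ℓ s ≤ l1
  have hℓle : ∀ s, 1 ≤ s → ℓ s ≤ l1 := by
    intro s hs; rw [hℓ s hs]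
    calc l1 ^ (α ^ (s - 1)) ≤ l1 ^ (1 : ℝ) :=
          Real.rpow_le_rpow_of_exponent_ge hl1 hl1one (one_le_pow₀ (by linarith))
      _ = l1 := Real.rpow_one l1
  have hℓ1 : ∀ s, 1 ≤ s → ℓ s ≤ 1 := fun s hs => le_trans (hℓle s hs) hl1one
  -- ℓ (s+1) ≤ ℓ s * ℓ s
  have hsq : ∀ s, 1 ≤ s → ℓ (s + 1) ≤ ℓ s * ℓ s := by
    intro s hs
    have h1 : ℓ (s + 1) = ℓ s ^ α := by
      rw [hℓ (s + 1) (by omega), hℓ s hs]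
      have h2 : s + 1 - 1 = (s - 1) + 1 := by omega
      rw [h2, pow_succ, Real.rpow_mul hl1.le]
    rw [h1]
    have hls := hℓpos s hs
    calc ℓ s ^ α ≤ ℓ s ^ (2 : ℝ) :=
          Real.rpow_le_rpow_of_exponent_ge hls (hℓ1 s hs) hα
      _ = ℓ s * ℓ s := by
          rw [show (2 : ℝ) = ((2 : ℕ) : ℝ) by norm_num, Real.rpow_natCast]; ring
  have hmono : ∀ s, 1 ≤ s → ℓ (s + 1) ≤ ℓ s := by
    intro s hs
    have := hsq s hs
    nlinarith [hℓpos s hs, hℓ1 s hs]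
  -- ℓ s ≤ 1/81 for s ≥ 3
  have h13 : ∀ s, 1 ≤ s → ℓ s ≤ 1 / 3 := fun s hs => le_trans (hℓle s hs) hl1'
  have hℓ2 : ℓ 2 ≤ 1 / 9 := by nlinarith [hsq 1 le_rfl, h13 1 le_rfl, hℓpos 1 le_rfl]
  have hℓ3 : ℓ 3 ≤ 1 / 81 := by nlinarith [hsq 2 (by norm_num), hℓpos 2 (by norm_num)]
  have h81 : ∀ s, 3 ≤ s → ℓ s ≤ 1 / 81 := by
    intro s hs
    induction s, hs using Nat.le_induction with
    | base => exact hℓ3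
    | succ m hm ih =>
      have := hsq m (by omega)
      nlinarith [hℓpos m (by omega), hℓ1 m (by omega)]
  -- h bounds
  have hhlow : ∀ s, 1 ≤ s → ℓ s / 3 ≤ h s := by
    intro s hs
    rw [hh s]
    nlinarith [hsq s hs, h13 s hs, hℓpos s hs]
  have hh0 : 1 / 3 ≤ h 0 := by
    rw [hh 0, hℓ0]
    have : ℓ 1 ≤ 1 / 3 := h13 1 le_rfl
    linarith
  have hhpos : ∀ s, 0 < h s := by
    intro s
    cases s with
    | zero => linarith
    | succ m =>
      have := hhlow (m + 1) (by omega)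
      have := hℓpos (m + 1) (by omega)
      linarith
  have hhub : ∀ s, 1 ≤ s → h s ≤ ℓ s := by
    intro s hs
    rw [hh s]
    have := hℓpos (s + 1) (by omega)
    linarith
  -- step lemma
  have hstep : ∀ m, 3 ≤ m → 4 * h (m + 1) ≤ h m := by
    intro m hm
    have h1 : h (m + 1) ≤ ℓ (m + 1) := hhub (m + 1) (by omega)
    have h2 : ℓ (m + 1) ≤ ℓ m * ℓ m := hsq m (by omega)
    have h3 : ℓ m ≤ 1 / 81 := h81 m hm
    have h4 : ℓ m / 3 ≤ h m := hhlow m (by omega)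
    nlinarith [hℓpos m (by omega)]
  -- main induction
  induction n, hn using Nat.le_induction with
  | base =>
    rw [show (4 : ℕ) + 1 = 5 by norm_num, Finset.sum_range_succ, Finset.sum_range_succ,
      Finset.sum_range_succ, Finset.sum_range_succ, Finset.sum_range_one]
    rw [show ((2:ℝ)^0) = 1 by norm_num, show ((2:ℝ)^1) = 2 by norm_num,
      show ((2:ℝ)^2) = 4 by norm_num, show ((2:ℝ)^3) = 8 by norm_num,
      show ((2:ℝ)^4) = 16 by norm_num, one_mul]
    set c := ℓ 3 with hc
    have hcpos : 0 < c := hℓpos 3 (by norm_num)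
    have hc81 : c ≤ 1 / 81 := hℓ3
    have hc1 : c ≤ ℓ 1 := le_trans (hmono 2 (by norm_num)) (hmono 1 le_rfl)
    have hc2 : c ≤ ℓ 2 := hmono 2 (by norm_num)
    have hd : ℓ 4 ≤ c * c := hsq 3 (by norm_num)
    have h4ub : h 4 ≤ ℓ 4 := hhub 4 (by norm_num)
    have h4pos : 0 < h 4 := hhpos 4
    have h1low := hhlow 1 le_rfl
    have h2low := hhlow 2 (by norm_num)
    have h3low := hhlow 3 (by norm_num)
    have hℓ1pos := hℓpos 1 le_rfl
    have hℓ2pos := hℓpos 2 (by norm_num)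
    -- term bounds
    have t0 : 1 / h 0 ≤ 3 + 0 := by
      rw [add_zero, div_le_iff₀ (hhpos 0)]; linarith
    have t1 : 1 / (2 * h 1) ≤ 3 / (2 * c) := by
      rw [div_le_div_iff₀ (by nlinarith [hhpos 1] : (0:ℝ) < 2 * h 1) (by positivity)]
      linarith
    have t2 : 1 / (4 * h 2) ≤ 3 / (4 * c) := by
      rw [div_le_div_iff₀ (by nlinarith [hhpos 2] : (0:ℝ) < 4 * h 2) (by positivity)]
      linarith
    have t3 : 1 / (8 * h 3) ≤ 3 / (8 * c) := by
      rw [div_le_div_iff₀ (by nlinarith [hhpos 3] : (0:ℝ) < 8 * h 3) (by positivity)]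
      linarith
    have t4 : 3 + 3 / (2 * c) + 3 / (4 * c) + 3 / (8 * c) ≤ 81 / (16 * c) := by
      have e : 3 + 3 / (2 * c) + 3 / (4 * c) + 3 / (8 * c) = (3 * c + 21 / 8) / c := by
        field_simp; ring
      rw [e, div_le_div_iff₀ hcpos (by positivity)]
      nlinarith [hcpos, hc81]
    have t5 : 81 / (16 * c) ≤ 1 / (16 * h 4) := by
      rw [div_le_div_iff₀ (by positivity) (by nlinarith [h4pos] : (0:ℝ) < 16 * h 4)]
      nlinarith [hd, hc81, hcpos, h4ub, h4pos]
    have goalR : 2 / (16 * h 4) = 1 / (16 * h 4) + 1 / (16 * h 4) := by ring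
    rw [goalR]
    linarith
  | succ m hm ih =>
    rw [Finset.sum_range_succ]
    have key : 2 / (2 ^ m * h m) + 1 / (2 ^ (m + 1) * h (m + 1)) ≤
        2 / (2 ^ (m + 1) * h (m + 1)) := by
      have hstep' := hstep m (by omega)
      have hp : (0 : ℝ) < 2 ^ m := by positivity
      have hpm := hhpos m
      have hpm1 := hhpos (m + 1)
      have e1 : 2 / (2 ^ m * h m) ≤ 1 / (2 ^ (m + 1) * h (m + 1)) := by
        rw [div_le_div_iff₀ (by nlinarith : (0:ℝ) < 2 ^ m * h m)
          (by nlinarith [pow_pos (by norm_num : (0:ℝ) < 2) (m + 1)] :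
            (0:ℝ) < 2 ^ (m + 1) * h (m + 1)), pow_succ]
        nlinarith
      have e2 : 2 / (2 ^ (m + 1) * h (m + 1)) =
          1 / (2 ^ (m + 1) * h (m + 1)) + 1 / (2 ^ (m + 1) * h (m + 1)) := by ring
      linarith
    linarith
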